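/- arXiv:2010.09099 — 2 statements merged into one kernel-verified Lean document; each statement's English description precedes it below -/
import Mathlib

section
/- Laplace mechanism is ε-differentially private: let g : D → ℝ be a function with sensitivity ω, i.e., |g(x) − g(x')| ≤ ω for all adjacent x, x' ∈ D. Define M(x) = g(x) + W where W ∼ Lap(0, ω/ε) with ε > 0. Then for every measurable set S ⊆ ℝ and adjacent x, x', P(M(x) ∈ S) ≤ e^ε · P(M(x') ∈ S). -/
open MeasureTheory

/-- The Laplace distribution `Lap(0, b)`: the measure on `ℝ` with density
`(1/(2b)) * exp (-|z|/b)` with respect to Lebesgue measure. -/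
noncomputable def laplaceMeasure (b : ℝ) : Measure ℝ :=
  volume.withDensity (fun z => ENNReal.ofReal ((2 * b)⁻¹ * Real.exp (-|z| / b)))

/-- The Laplace mechanism is `ε`-differentially private: if `g` has sensitivity `ω`
with respect to the adjacency relation `Adj`, and `M x` is the law of `g x + W`
with `W ∼ Lap(0, ω/ε)`, then `P(M(x) ∈ S) ≤ e^ε · P(M(x') ∈ S)` for adjacent
`x, x'` and measurable `S`. -/
theorem laplace_mechanism_dp {D : Type*} (Adj : D → D → Prop) (g : D → ℝ)
    (ε ω : ℝ) (hε : 0 < ε) (hω : 0 < ω)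
    (hsens : ∀ x x', Adj x x' → |g x - g x'| ≤ ω)
    (M : D → Measure ℝ)
    (hM : ∀ x, M x = (laplaceMeasure (ω / ε)).map (fun w => g x + w)) :
    ∀ x x', Adj x x' → ∀ S : Set ℝ, MeasurableSet S →
      M x S ≤ ENNReal.ofReal (Real.exp ε) * M x' S := by
  intro x x' hadj S hS
  set b := ω / ε with hb
  have hbpos : 0 < b := div_pos hω hε
  set dens : ℝ → ENNReal := fun z => ENNReal.ofReal ((2 * b)⁻¹ * Real.exp (-|z| / b))
    with hdens
  have hdens_meas : Measurable dens := by
    apply Measurable.ennreal_ofReal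
    exact (measurable_id.norm.neg.div_const b).exp.const_mul _
  have key : ∀ y : D, M y S = ∫⁻ z in S, dens (z - g y) := by
    intro y
    rw [hM y, laplaceMeasure, Measure.map_apply (measurable_const_add _) hS,
        withDensity_apply _ (hS.preimage (measurable_const_add _)),
        ← lintegral_indicator (hS.preimage (measurable_const_add _)) dens,
        ← lintegral_indicator hS]
    have heq : ∀ w : ℝ, ((fun w => g y + w) ⁻¹' S).indicator dens w
        = (S.indicator fun z => dens (z - g y)) (g y + w) := by
      intro w
      by_cases h : g y + w ∈ S <;>
        simp [Set.indicator, Set.mem_preimage, h]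
    calc ∫⁻ w, ((fun w => g y + w) ⁻¹' S).indicator dens w
        = ∫⁻ w, (S.indicator fun z => dens (z - g y)) (g y + w) := by
          simp only [heq]
      _ = ∫⁻ z, (S.indicator fun z => dens (z - g y)) z :=
          lintegral_add_left_eq_self _ (g y)
  rw [key x, key x']
  have hmeas' : Measurable fun z : ℝ => dens (z - g x') := by fun_prop
  rw [← lintegral_const_mul _ hmeas']
  apply lintegral_mono
  intro z
  have h1 : |z - g x'| ≤ |z - g x| + ω := by
    have := hsens x x' hadj
    calc |z - g x'| = |(z - g x) + (g x - g x')| := by ring_nf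
      _ ≤ |z - g x| + |g x - g x'| := abs_add_le _ _
      _ ≤ |z - g x| + ω := by linarith
  have h2 : Real.exp (-|z - g x| / b) ≤ Real.exp ε * Real.exp (-|z - g x'| / b) := by
    rw [← Real.exp_add]
    apply Real.exp_le_exp.mpr
    have hbe : ε * b = ω := by
      rw [hb, mul_div_assoc']
      exact mul_div_cancel_left₀ ω (ne_of_gt hε)
    rw [div_le_iff₀ hbpos, add_mul, div_mul_cancel₀ _ (ne_of_gt hbpos)]
    linarith
  simp only [hdens, ← ENNReal.ofReal_mul (Real.exp_nonneg ε)]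
  apply ENNReal.ofReal_le_ofReal
  have h2b : (2 * b)⁻¹ > 0 := by positivity
  calc (2 * b)⁻¹ * Real.exp (-|z - g x| / b)
      ≤ (2 * b)⁻¹ * (Real.exp ε * Real.exp (-|z - g x'| / b)) := by
        apply mul_le_mul_of_nonneg_left h2 (le_of_lt h2b)
    _ = Real.exp ε * ((2 * b)⁻¹ * Real.exp (-|z - g x'| / b)) := by ring
end

section
/- Phase-angle noise injection achieves ε-differential privacy of flow (Theorem 5): let θ1, θ2 be real phase angles, Γ ≠ 0, ε > 0, ω > 0. Let α1, α2 be independent exponential random variables with mean ω/(|Γ|ε). Then the perturbed flow M'(θ1, θ2) = Γ·((θ1 + α1) − (θ2 + α2)) equals the true flow f = Γ(θ1 − θ2) plus noise ψ = Γ(α1 − α2), and ψ has the Laplace distribution Lap(0, ω/ε). Consequently, for any other pair (θ1', θ2') with |Γ(θ1 − θ2) − Γ(θ1' − θ2')| ≤ ω, the laws satisfy P(M'(θ1,θ2) ∈ S) ≤ e^ε P(M'(θ1',θ2') ∈ S) for all measurable S ⊆ ℝ. -/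
open MeasureTheory ProbabilityTheory

open scoped ENNReal

lemma expMeasure_def (r : ℝ) : expMeasure r = volume.withDensity (exponentialPDF r) := rfl

lemma measurable_expPDF (r : ℝ) : Measurable (exponentialPDF r) :=
  (measurable_exponentialPDFReal r).ennreal_ofReal

lemma measurable_lapD (b : ℝ) :
    Measurable (fun z : ℝ => ENNReal.ofReal ((2 * b)⁻¹ * Real.exp (-|z| / b))) := by
  fun_prop

lemma lint_sub_left (F : ℝ → ℝ≥0∞) (hF : Measurable F) (x : ℝ) :
    ∫⁻ y, F (x - y) = ∫⁻ z, F z := by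
  have hneg : Measure.map (fun y : ℝ => -y) volume = volume := by
    have h := Real.map_volume_mul_left (a := (-1:ℝ)) (by norm_num)
    simpa using h
  have h1 : ∫⁻ y, F (x - y) = ∫⁻ y, (fun t => F (x + t)) (-y) := by
    simp [sub_eq_add_neg]
  rw [h1]
  have h2 : ∫⁻ y, (fun t => F (x + t)) (-y) = ∫⁻ t, F (x + t) ∂(Measure.map (fun y : ℝ => -y) volume) := by
    rw [lintegral_map (by fun_prop) measurable_neg]
  rw [h2, hneg]
  exact lintegral_add_left_eq_self F x

lemma conv_pt {r : ℝ} (hr : 0 < r) (z x : ℝ) :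
    exponentialPDF r x * exponentialPDF r (x - z) =
      ENNReal.ofReal ((2 * r⁻¹)⁻¹ * Real.exp (-|z| / r⁻¹)) *
        exponentialPDF (2 * r) (x - max 0 z) := by
  rcases le_or_gt (max 0 z) x with h | h
  · have hx : (0:ℝ) ≤ x := le_trans (le_max_left 0 z) h
    have hxz : (0:ℝ) ≤ x - z := by have := le_max_right 0 z; linarith
    have hxm : (0:ℝ) ≤ x - max 0 z := by linarith
    rw [exponentialPDF_of_nonneg hx, exponentialPDF_of_nonneg hxz,
      exponentialPDF_of_nonneg hxm, ← ENNReal.ofReal_mul (by positivity),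
      ← ENNReal.ofReal_mul (by positivity)]
    congr 1
    have hm : 2 * max 0 z = z + |z| := by
      rcases le_total z 0 with hz | hz
      · rw [max_eq_left hz, abs_of_nonpos hz]; ring
      · rw [max_eq_right hz, abs_of_nonneg hz]; ring
    have hinv : -|z| / r⁻¹ = -(r * |z|) := by
      field_simp
    have he : Real.exp (-(r * x)) * Real.exp (-(r * (x - z))) =
        Real.exp (-|z| / r⁻¹) * Real.exp (-(2 * r * (x - max 0 z))) := by
      rw [← Real.exp_add, ← Real.exp_add, hinv]
      congr 1
      linear_combination -(r * hm)
    have hco : (2 * r⁻¹)⁻¹ = r / 2 := by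
      rw [mul_inv, inv_inv]; ring
    calc r * Real.exp (-(r * x)) * (r * Real.exp (-(r * (x - z))))
        = r * r * (Real.exp (-(r * x)) * Real.exp (-(r * (x - z)))) := by ring
      _ = r * r * (Real.exp (-|z| / r⁻¹) * Real.exp (-(2 * r * (x - max 0 z)))) := by rw [he]
      _ = (2 * r⁻¹)⁻¹ * Real.exp (-|z| / r⁻¹) *
            (2 * r * Real.exp (-(2 * r * (x - max 0 z)))) := by rw [hco]; ring
  · rw [exponentialPDF_of_neg (by linarith : x - max 0 z < 0), mul_zero]
    rcases lt_max_iff.mp h with h0 | hz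
    · rw [exponentialPDF_of_neg h0, zero_mul]
    · rw [exponentialPDF_of_neg (by linarith : x - z < 0), mul_zero]

lemma conv_exp {r : ℝ} (hr : 0 < r) (z : ℝ) :
    ∫⁻ x, exponentialPDF r x * exponentialPDF r (x - z) =
      ENNReal.ofReal ((2 * r⁻¹)⁻¹ * Real.exp (-|z| / r⁻¹)) := by
  have h2r : (0:ℝ) < 2 * r := by linarith
  simp_rw [conv_pt hr z]
  rw [lintegral_const_mul _ (f := fun x => exponentialPDF (2 * r) (x - max 0 z))
      ((measurable_expPDF (2 * r)).comp (measurable_id.sub measurable_const))]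
  rw [lintegral_sub_right_eq_self (exponentialPDF (2 * r)) (max 0 z),
    lintegral_exponentialPDF_eq_one h2r, mul_one]

lemma map_sub_exp {r : ℝ} (hr : 0 < r) :
    ((expMeasure r).prod (expMeasure r)).map (fun p : ℝ × ℝ => p.1 - p.2) =
      laplaceMeasure r⁻¹ := by
  haveI := isProbabilityMeasure_expMeasure hr
  have hm : Measurable fun p : ℝ × ℝ => p.1 - p.2 := measurable_fst.sub measurable_snd
  have hfE := measurable_expPDF r
  ext S hS
  rw [Measure.map_apply hm hS, laplaceMeasure, withDensity_apply _ hS,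
    Measure.prod_apply (hm hS)]
  calc ∫⁻ x, (expMeasure r) (Prod.mk x ⁻¹' ((fun p : ℝ × ℝ => p.1 - p.2) ⁻¹' S)) ∂(expMeasure r)
      = ∫⁻ x, (∫⁻ z in S, exponentialPDF r (x - z)) ∂(expMeasure r) := by
        refine lintegral_congr fun x => ?_
        have hpre : Prod.mk x ⁻¹' ((fun p : ℝ × ℝ => p.1 - p.2) ⁻¹' S)
            = (fun y => x - y) ⁻¹' S := rfl
        have hSm : MeasurableSet ((fun y : ℝ => x - y) ⁻¹' S) :=
          (measurable_const.sub measurable_id) hS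
        rw [hpre, expMeasure_def, withDensity_apply _ hSm,
          ← lintegral_indicator hSm _, ← lintegral_indicator hS _]
        have hptw : ∀ y, ((fun y : ℝ => x - y) ⁻¹' S).indicator (exponentialPDF r) y
            = (S.indicator fun w => exponentialPDF r (x - w)) (x - y) := by
          intro y
          by_cases hy : x - y ∈ S
          · rw [Set.indicator_of_mem (by exact hy) (exponentialPDF r),
              Set.indicator_of_mem hy, sub_sub_cancel]
          · rw [Set.indicator_of_notMem (by exact hy), Set.indicator_of_notMem hy]
        simp_rw [hptw]
        exact lint_sub_left _ ((hfE.comp (measurable_const.sub measurable_id)).indicator hS) x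
    _ = ∫⁻ x, exponentialPDF r x * (∫⁻ z in S, exponentialPDF r (x - z)) := by
        rw [expMeasure_def]
        exact lintegral_withDensity_eq_lintegral_mul _ hfE
          (Measurable.lintegral_prod_right
            ((hfE.comp (measurable_fst.sub measurable_snd))))
    _ = ∫⁻ x, (∫⁻ z in S, exponentialPDF r x * exponentialPDF r (x - z)) := by
        refine lintegral_congr fun x => ?_
        exact (lintegral_const_mul _ (hfE.comp (measurable_const.sub measurable_id))).symm
    _ = ∫⁻ z in S, ∫⁻ x, exponentialPDF r x * exponentialPDF r (x - z) := by
        exact lintegral_lintegral_swap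
          (((hfE.comp measurable_fst).mul
            (hfE.comp (measurable_fst.sub measurable_snd))).aemeasurable)
    _ = ∫⁻ z in S, ENNReal.ofReal ((2 * r⁻¹)⁻¹ * Real.exp (-|z| / r⁻¹)) :=
        lintegral_congr fun z => conv_exp hr z

lemma laplace_scale {b c : ℝ} (hb : 0 < b) (hc : c ≠ 0) :
    (laplaceMeasure b).map (fun z => c * z) = laplaceMeasure (|c| * b) := by
  have hc' : |c| ≠ 0 := abs_ne_zero.mpr hc
  ext S hS
  rw [Measure.map_apply (measurable_const_mul c) hS, laplaceMeasure, laplaceMeasure,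
    withDensity_apply _ ((measurable_const_mul c) hS), withDensity_apply _ hS,
    ← lintegral_indicator ((measurable_const_mul c) hS) _, ← lintegral_indicator hS _]
  set F : ℝ → ℝ≥0∞ :=
    S.indicator fun w => ENNReal.ofReal ((2 * b)⁻¹ * Real.exp (-|w / c| / b)) with hF
  have hFm : Measurable F := by
    apply Measurable.indicator _ hS
    fun_prop
  have h1 : ∀ z, ((fun z : ℝ => c * z) ⁻¹' S).indicator
      (fun z => ENNReal.ofReal ((2 * b)⁻¹ * Real.exp (-|z| / b))) z = F (c * z) := by
    intro z
    by_cases hz : c * z ∈ S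
    · rw [Set.indicator_of_mem (by exact hz), hF, Set.indicator_of_mem hz,
        mul_div_cancel_left₀ _ hc]
    · rw [Set.indicator_of_notMem (by exact hz), hF, Set.indicator_of_notMem hz]
  simp_rw [h1]
  have h2 : ∫⁻ z, F (c * z) = ∫⁻ w, F w ∂(Measure.map (fun z : ℝ => c * z) volume) :=
    (lintegral_map hFm (measurable_const_mul c)).symm
  rw [h2, Real.map_volume_mul_left hc, lintegral_smul_measure, smul_eq_mul,
    ← lintegral_const_mul _ hFm]
  refine lintegral_congr fun w => ?_
  by_cases hw : w ∈ S
  · rw [hF, Set.indicator_of_mem hw, Set.indicator_of_mem hw,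
      ← ENNReal.ofReal_mul (abs_nonneg _)]
    congr 1
    have hexp : -|w / c| / b = -|w| / (|c| * b) := by
      rw [abs_div, neg_div, div_div, neg_div]
    have hco : (2 * (|c| * b))⁻¹ = |c|⁻¹ * (2 * b)⁻¹ := by
      rw [← mul_inv]; ring_nf
    rw [hexp, abs_inv, hco, mul_assoc]
  · rw [hF, Set.indicator_of_notMem hw, Set.indicator_of_notMem hw, mul_zero]

lemma laplace_translate (b t : ℝ) :
    (laplaceMeasure b).map (fun z => t + z) =
      volume.withDensity (fun z => ENNReal.ofReal ((2 * b)⁻¹ * Real.exp (-|z - t| / b))) := by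
  ext S hS
  rw [Measure.map_apply (measurable_const_add t) hS, laplaceMeasure,
    withDensity_apply _ ((measurable_const_add t) hS), withDensity_apply _ hS,
    ← lintegral_indicator ((measurable_const_add t) hS) _, ← lintegral_indicator hS _]
  set F : ℝ → ℝ≥0∞ :=
    S.indicator fun w => ENNReal.ofReal ((2 * b)⁻¹ * Real.exp (-|w - t| / b)) with hF
  have h1 : ∀ z, ((fun z : ℝ => t + z) ⁻¹' S).indicator
      (fun z => ENNReal.ofReal ((2 * b)⁻¹ * Real.exp (-|z| / b))) z = F (t + z) := by
    intro z
    by_cases hz : t + z ∈ S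
    · rw [Set.indicator_of_mem (by exact hz), hF, Set.indicator_of_mem hz,
        add_sub_cancel_left]
    · rw [Set.indicator_of_notMem (by exact hz), hF, Set.indicator_of_notMem hz]
  simp_rw [h1]
  exact lintegral_add_left_eq_self F t

/-- Phase-angle noise injection achieves `ε`-differential privacy of flow:
if `α1, α2` are independent exponential random variables with mean `ω/(|Γ|ε)`,
then the noise `ψ = Γ(α1 - α2)` in the perturbed flow
`M'(θ1,θ2) = Γ((θ1+α1) - (θ2+α2)) = Γ(θ1-θ2) + ψ` is `Lap(0, ω/ε)` distributed,
and whenever the true flows `Γ(θ1-θ2)` and `Γ(θ1'-θ2')` differ by at most `ω`,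
`P(M'(θ1,θ2) ∈ S) ≤ e^ε · P(M'(θ1',θ2') ∈ S)` for all measurable `S`. -/
theorem phase_angle_noise_dp {Ω : Type*} [MeasurableSpace Ω] (P : Measure Ω)
    [IsProbabilityMeasure P] (Γ ε ω : ℝ) (hΓ : Γ ≠ 0) (hε : 0 < ε) (hω : 0 < ω)
    (α1 α2 : Ω → ℝ) (hα1 : Measurable α1) (hα2 : Measurable α2)
    (hindep : IndepFun α1 α2 P)
    (hlaw1 : P.map α1 = expMeasure (ω / (|Γ| * ε))⁻¹)
    (hlaw2 : P.map α2 = expMeasure (ω / (|Γ| * ε))⁻¹) :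
    (P.map (fun a => Γ * (α1 a - α2 a)) = laplaceMeasure (ω / ε)) ∧
    (∀ θ1 θ2 θ1' θ2' : ℝ, |Γ * (θ1 - θ2) - Γ * (θ1' - θ2')| ≤ ω →
      ∀ S : Set ℝ, MeasurableSet S →
        P.map (fun a => Γ * ((θ1 + α1 a) - (θ2 + α2 a))) S ≤
          ENNReal.ofReal (Real.exp ε) *
            P.map (fun a => Γ * ((θ1' + α1 a) - (θ2' + α2 a))) S) := by
  have hΓ' : (0:ℝ) < |Γ| := abs_pos.mpr hΓ
  have hb0 : (0:ℝ) < ω / (|Γ| * ε) := div_pos hω (mul_pos hΓ' hε)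
  have hb : (0:ℝ) < ω / ε := div_pos hω hε
  have hpair : P.map (fun a => (α1 a, α2 a)) = (P.map α1).prod (P.map α2) :=
    (indepFun_iff_map_prod_eq_prod_map_map hα1.aemeasurable hα2.aemeasurable).mp hindep
  have hdiff : P.map (fun a => α1 a - α2 a) = laplaceMeasure (ω / (|Γ| * ε)) := by
    calc P.map (fun a => α1 a - α2 a)
        = (P.map (fun a => (α1 a, α2 a))).map (fun p : ℝ × ℝ => p.1 - p.2) := by
          rw [Measure.map_map (g := fun p : ℝ × ℝ => p.1 - p.2) (f := fun a => (α1 a, α2 a)) (measurable_fst.sub measurable_snd) (hα1.prodMk hα2)]; rfl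
      _ = ((expMeasure (ω / (|Γ| * ε))⁻¹).prod (expMeasure (ω / (|Γ| * ε))⁻¹)).map
            (fun p : ℝ × ℝ => p.1 - p.2) := by rw [hpair, hlaw1, hlaw2]
      _ = laplaceMeasure ((ω / (|Γ| * ε))⁻¹)⁻¹ := map_sub_exp (by positivity)
      _ = laplaceMeasure (ω / (|Γ| * ε)) := by rw [inv_inv]
  have hψ : Measurable fun a => Γ * (α1 a - α2 a) := (hα1.sub hα2).const_mul Γ
  have hpart1 : P.map (fun a => Γ * (α1 a - α2 a)) = laplaceMeasure (ω / ε) := by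
    calc P.map (fun a => Γ * (α1 a - α2 a))
        = (P.map (fun a => α1 a - α2 a)).map (fun z => Γ * z) := by
          rw [Measure.map_map (f := fun a => α1 a - α2 a) (measurable_const_mul Γ) (hα1.sub hα2)]; rfl
      _ = laplaceMeasure (|Γ| * (ω / (|Γ| * ε))) := by
          rw [hdiff]; exact laplace_scale hb0 hΓ
      _ = laplaceMeasure (ω / ε) := by
          congr 1
          field_simp
  refine ⟨hpart1, fun θ1 θ2 θ1' θ2' hd S hS => ?_⟩
  have hmap : ∀ t1 t2 : ℝ, P.map (fun a => Γ * ((t1 + α1 a) - (t2 + α2 a))) =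
      volume.withDensity (fun z =>
        ENNReal.ofReal ((2 * (ω / ε))⁻¹ * Real.exp (-|z - Γ * (t1 - t2)| / (ω / ε)))) := by
    intro t1 t2
    have hfun : (fun a => Γ * ((t1 + α1 a) - (t2 + α2 a)))
        = fun a => Γ * (t1 - t2) + Γ * (α1 a - α2 a) := by funext a; ring
    have hmm : P.map (fun a => Γ * (t1 - t2) + Γ * (α1 a - α2 a)) =
        (P.map (fun a => Γ * (α1 a - α2 a))).map (fun z => Γ * (t1 - t2) + z) := by
      rw [Measure.map_map (measurable_const_add _) hψ]; rfl
    rw [hfun, hmm, hpart1, laplace_translate]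
  have hDm : Measurable fun z : ℝ =>
      ENNReal.ofReal ((2 * (ω / ε))⁻¹ * Real.exp (-|z - Γ * (θ1' - θ2')| / (ω / ε))) := by
    fun_prop
  rw [hmap θ1 θ2, hmap θ1' θ2', withDensity_apply _ hS, withDensity_apply _ hS,
    ← lintegral_const_mul _ hDm]
  refine lintegral_mono fun z => ?_
  rw [← ENNReal.ofReal_mul (le_of_lt (Real.exp_pos ε))]
  apply ENNReal.ofReal_le_ofReal
  set t1 := Γ * (θ1 - θ2)
  set t2 := Γ * (θ1' - θ2')
  have habs : |z - t2| - |z - t1| ≤ ω := by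
    have h1 : |z - t2| - |z - t1| ≤ |(z - t2) - (z - t1)| := abs_sub_abs_le_abs_sub _ _
    have h2 : (z - t2) - (z - t1) = t1 - t2 := by ring
    rw [h2] at h1
    exact le_trans h1 hd
  have hexp : Real.exp (-|z - t1| / (ω / ε)) ≤ Real.exp (ε + -|z - t2| / (ω / ε)) := by
    apply Real.exp_le_exp.mpr
    have h3 : (|z - t2| - |z - t1|) / (ω / ε) ≤ ω / (ω / ε) := by gcongr
    have hωb : ω / (ω / ε) = ε := by field_simp
    rw [hωb, sub_div] at h3
    rw [neg_div, neg_div]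
    linarith
  have h2b : (0:ℝ) < (2 * (ω / ε))⁻¹ := by positivity
  calc (2 * (ω / ε))⁻¹ * Real.exp (-|z - t1| / (ω / ε))
      ≤ (2 * (ω / ε))⁻¹ * Real.exp (ε + -|z - t2| / (ω / ε)) :=
        mul_le_mul_of_nonneg_left hexp (le_of_lt h2b)
    _ = Real.exp ε * ((2 * (ω / ε))⁻¹ * Real.exp (-|z - t2| / (ω / ε))) := by
        rw [Real.exp_add]; ring
end
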